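/- European Alpha formula: With X_T = x exp(γT + σW_T + Σ_{i=1}^{N_T} αYᵢ + X_T^{(3)}), for Φ ∈ C¹(ℝ) with bounded derivative, ∂/∂α E[Φ(X_T)] = (1/(σT)) E[Φ(X_T) W_T Σ_{i=1}^{N_T} Yᵢ]. -/

import Mathlib

open MeasureTheory ProbabilityTheory Real Filter Set
open scoped NNReal ENNReal

lemma integrable_L2_mul' {Ω : Type*} [MeasurableSpace Ω] {μ : Measure Ω} {f g : Ω → ℝ}
    (hf : MemLp f 2 μ) (hg : MemLp g 2 μ) : Integrable (fun ω => f ω * g ω) μ := by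
  have h := hg.smul hf (p := 2) (q := 2) (r := 1)
  rw [memLp_one_iff_integrable] at h
  simpa [smul_eq_mul, Pi.mul_def] using h

lemma integrable_exp_sub_quad (t c : ℝ) (ht : 0 < t) :
    Integrable (fun w : ℝ => Real.exp (c * w - w ^ 2 / (2 * t))) := by
  have key : ∀ w : ℝ, c * w - w ^ 2 / (2 * t)
      = c ^ 2 * t / 2 + (-(1 / (2 * t)) * (w - c * t) ^ 2) := by
    intro w; field_simp; ring
  simp_rw [key, Real.exp_add]
  exact ((integrable_exp_neg_mul_sq (by positivity : (0:ℝ) < 1 / (2 * t))).comp_sub_right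
    (c * t)).const_mul _

lemma integrable_exp_abs_quad (t B : ℝ) (ht : 0 < t) :
    Integrable (fun w : ℝ => Real.exp (B * |w|) * Real.exp (- w ^ 2 / (2 * t))) := by
  have hk := (integrable_exp_sub_quad t B ht).add (integrable_exp_sub_quad t (-B) ht)
  refine hk.mono' ?_ (ae_of_all _ fun w => ?_)
  · exact ((Real.continuous_exp.comp (continuous_const.mul continuous_abs)).mul
      (by continuity)).aestronglyMeasurable
  · rw [Real.norm_eq_abs, abs_of_nonneg (by positivity), ← Real.exp_add]
    have : B * |w| + -w ^ 2 / (2 * t) = B * w - w ^ 2 / (2 * t)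
        ∨ B * |w| + -w ^ 2 / (2 * t) = (-B) * w - w ^ 2 / (2 * t) := by
      rcases abs_cases w with ⟨h1, _⟩ | ⟨h1, _⟩
      · left; rw [h1]; ring
      · right; rw [h1]; ring
    rcases this with h | h <;> rw [h]
    · exact le_add_of_nonneg_right (Real.exp_pos _).le
    · exact le_add_of_nonneg_left (Real.exp_pos _).le

lemma gaussianReal_eq_withDensity {t : ℝ} (ht : 0 < t) :
    gaussianReal 0 t.toNNReal = volume.withDensity
      (fun w => ENNReal.ofReal ((Real.sqrt (2 * π * t))⁻¹ * Real.exp (- w ^ 2 / (2 * t)))) := by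
  have hV : (t.toNNReal : ℝ) = t := Real.coe_toNNReal t ht.le
  have hVne : t.toNNReal ≠ 0 := by
    simp only [ne_eq, Real.toNNReal_eq_zero, not_le]; exact ht
  rw [gaussianReal_of_var_ne_zero _ hVne]
  congr 1
  funext w
  rw [gaussianPDF_def]
  simp [gaussianPDFReal, hV]

lemma integral_gaussianReal_eq {t : ℝ} (ht : 0 < t) (g : ℝ → ℝ) :
    ∫ w, g w ∂(gaussianReal 0 t.toNNReal)
      = ∫ w, g w * ((Real.sqrt (2 * π * t))⁻¹ * Real.exp (- w ^ 2 / (2 * t))) := by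
  rw [gaussianReal_eq_withDensity ht]
  have hm : Measurable fun w : ℝ =>
      ((Real.sqrt (2 * π * t))⁻¹ * Real.exp (- w ^ 2 / (2 * t))).toNNReal := by
    measurability
  rw [show (fun w : ℝ => ENNReal.ofReal ((Real.sqrt (2 * π * t))⁻¹ * Real.exp (- w ^ 2 / (2 * t))))
      = (fun w : ℝ => ((((Real.sqrt (2 * π * t))⁻¹
        * Real.exp (- w ^ 2 / (2 * t))).toNNReal : ℝ≥0) : ℝ≥0∞)) from rfl,
    integral_withDensity_eq_integral_smul hm g]
  congr 1
  funext w
  rw [NNReal.smul_def, smul_eq_mul, Real.coe_toNNReal _ (by positivity), mul_comm]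

lemma integrable_gaussianReal_iff {t : ℝ} (ht : 0 < t) (g : ℝ → ℝ) :
    Integrable g (gaussianReal 0 t.toNNReal)
      ↔ Integrable (fun w => g w * ((Real.sqrt (2 * π * t))⁻¹ * Real.exp (- w ^ 2 / (2 * t)))) := by
  rw [gaussianReal_eq_withDensity ht,
    integrable_withDensity_iff (by measurability) (ae_of_all _ fun w => ENNReal.ofReal_lt_top)]
  have : (fun w : ℝ => g w * (ENNReal.ofReal ((Real.sqrt (2 * π * t))⁻¹
      * Real.exp (- w ^ 2 / (2 * t)))).toReal)
      = fun w => g w * ((Real.sqrt (2 * π * t))⁻¹ * Real.exp (- w ^ 2 / (2 * t))) := by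
    funext w; rw [ENNReal.toReal_ofReal (by positivity)]
  rw [this]

lemma integrable_gaussian_of_bound {t : ℝ} (ht : 0 < t) {g : ℝ → ℝ} (hg : Continuous g)
    (A B : ℝ) (hbd : ∀ w, |g w| ≤ A * Real.exp (B * |w|)) :
    Integrable g (gaussianReal 0 t.toNNReal) := by
  rw [integrable_gaussianReal_iff ht]
  have hK : (0:ℝ) ≤ (Real.sqrt (2 * π * t))⁻¹ := by positivity
  refine ((integrable_exp_abs_quad t B ht).const_mul
    (A * (Real.sqrt (2 * π * t))⁻¹)).mono'
    ((hg.mul (by continuity)).aestronglyMeasurable) (ae_of_all _ fun w => ?_)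
  rw [Real.norm_eq_abs, abs_mul,
    abs_of_nonneg (by positivity : (0:ℝ) ≤ (Real.sqrt (2 * π * t))⁻¹ * Real.exp (- w ^ 2 / (2 * t)))]
  calc |g w| * ((Real.sqrt (2 * π * t))⁻¹ * Real.exp (- w ^ 2 / (2 * t)))
      ≤ (A * Real.exp (B * |w|)) * ((Real.sqrt (2 * π * t))⁻¹ * Real.exp (- w ^ 2 / (2 * t))) :=
        mul_le_mul_of_nonneg_right (hbd w) (by positivity)
    _ = A * (Real.sqrt (2 * π * t))⁻¹ * (Real.exp (B * |w|) * Real.exp (- w ^ 2 / (2 * t))) := by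
        ring
lemma gaussian_ibp {t : ℝ} (ht : 0 < t) {f f' : ℝ → ℝ}
    (hderiv : ∀ w, HasDerivAt f (f' w) w) (hf'c : Continuous f')
    {A B : ℝ} (hfb : ∀ w, |f w| ≤ A * Real.exp (B * |w|))
    (hf'b : ∀ w, |f' w| ≤ A * Real.exp (B * |w|)) :
    ∫ w, f w * w ∂(gaussianReal 0 t.toNNReal)
      = t * ∫ w, f' w ∂(gaussianReal 0 t.toNNReal) := by
  have ht' : t ≠ 0 := ht.ne'
  have hfc : Continuous f := continuous_iff_continuousAt.mpr fun w => (hderiv w).continuousAt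
  set K := (Real.sqrt (2 * π * t))⁻¹ with hKdef
  have hK : (0:ℝ) < K := by positivity
  set e : ℝ → ℝ := fun w => Real.exp (- w ^ 2 / (2 * t)) with hedef
  have he : Continuous e := by
    apply Real.continuous_exp.comp; continuity
  have hepos : ∀ w, 0 < e w := fun w => Real.exp_pos _
  have hA : 0 ≤ A := le_trans (abs_nonneg (f 0)) (by simpa using hfb 0)
  -- derivative of g = f * e
  have hg' : ∀ w, HasDerivAt (fun w => f w * e w)
      (f' w * e w - f w * (w / t) * e w) w := by
    intro w
    have h1 : HasDerivAt (fun w : ℝ => - w ^ 2 / (2 * t)) (- (2 * w ^ 1) / (2 * t)) w := by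
      exact ((hasDerivAt_pow 2 w).neg).div_const (2 * t)
    have h2 : HasDerivAt e (Real.exp (- w ^ 2 / (2 * t)) * (- (2 * w ^ 1) / (2 * t))) w := h1.exp
    have h3 := (hderiv w).mul h2
    refine h3.congr_deriv ?_
    simp only [hedef]
    field_simp
    ring
  -- integrability of all pieces
  have I1 : Integrable (fun w => f' w * e w) := by
    refine ((integrable_exp_abs_quad t B ht).const_mul A).mono'
      ((hf'c.mul he).aestronglyMeasurable) (ae_of_all _ fun w => ?_)
    rw [Real.norm_eq_abs, abs_mul, abs_of_pos (hepos w)]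
    calc |f' w| * e w ≤ (A * Real.exp (B * |w|)) * e w :=
          mul_le_mul_of_nonneg_right (hf'b w) (hepos w).le
      _ = A * (Real.exp (B * |w|) * e w) := by ring
  have habs : ∀ w : ℝ, |w| ≤ Real.exp |w| := fun w =>
    le_trans (by linarith [abs_nonneg w]) (Real.add_one_le_exp |w|)
  have I2 : Integrable (fun w => f w * (w / t) * e w) := by
    refine ((integrable_exp_abs_quad t (B + 1) ht).const_mul (A / t)).mono'
      (((hfc.mul (continuous_id.div_const t)).mul he).aestronglyMeasurable)
      (ae_of_all _ fun w => ?_)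
    rw [Real.norm_eq_abs, abs_mul, abs_mul, abs_div, abs_of_pos ht, abs_of_pos (hepos w)]
    have h1 : |f w| * (|w| / t) ≤ (A * Real.exp (B * |w|)) * (Real.exp |w| / t) := by
      apply mul_le_mul (hfb w) _ (by positivity) (by positivity)
      exact div_le_div_of_nonneg_right (habs w) ht.le
    calc |f w| * (|w| / t) * e w
        ≤ (A * Real.exp (B * |w|)) * (Real.exp |w| / t) * e w :=
          mul_le_mul_of_nonneg_right h1 (hepos w).le
      _ = A / t * (Real.exp ((B + 1) * |w|) * e w) := by
          rw [add_mul, Real.exp_add, one_mul]; ring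
  have Ig : Integrable (fun w => f w * e w) := by
    refine ((integrable_exp_abs_quad t B ht).const_mul A).mono'
      ((hfc.mul he).aestronglyMeasurable) (ae_of_all _ fun w => ?_)
    rw [Real.norm_eq_abs, abs_mul, abs_of_pos (hepos w)]
    calc |f w| * e w ≤ (A * Real.exp (B * |w|)) * e w :=
          mul_le_mul_of_nonneg_right (hfb w) (hepos w).le
      _ = A * (Real.exp (B * |w|) * e w) := by ring
  have hzero : ∫ w, (f' w * e w - f w * (w / t) * e w) = 0 :=
    integral_eq_zero_of_hasDerivAt_of_integrable hg' (I1.sub I2) Ig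
  have hkey : ∫ w, f' w * e w = ∫ w, f w * (w / t) * e w := by
    rwa [integral_sub I1 I2, sub_eq_zero] at hzero
  rw [integral_gaussianReal_eq ht, integral_gaussianReal_eq ht]
  have l1 : (fun w => f w * w * (K * e w)) = fun w => (t * K) * (f w * (w / t) * e w) := by
    funext w; field_simp
  have l2 : (fun w => f' w * (K * e w)) = fun w => K * (f' w * e w) := by
    funext w; ring
  rw [l1, l2, integral_const_mul, integral_const_mul, ← hkey]
  ring
set_option maxHeartbeats 2000000 in
/-- European Alpha formula: with
`X_T = x exp(γT + σW_T + α Σ_{i=1}^{N_T} Yᵢ + X_T^{(3)})`, where `S = Σ_{i=1}^{N_T} Yᵢ`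
is the (normalized) compound Poisson part and `M = X_T^{(3)}` the pure jump martingale
part, both independent of the Gaussian `W_T`, for `Φ ∈ C¹(ℝ)` with bounded derivative,
`∂/∂α E[Φ(X_T)] = (1/(σT)) E[Φ(X_T) W_T Σ_{i=1}^{N_T} Yᵢ]`. -/
theorem european_alpha
    {Ω : Type*} [MeasurableSpace Ω] (μ : Measure Ω) [IsProbabilityMeasure μ]
    (T γ σ x α : ℝ) (hT : 0 < T) (hσ : σ ≠ 0) (hx : 0 < x)
    (WT : Ω → ℝ) (S : Ω → ℝ) (M : Ω → ℝ)
    (hWmeas : Measurable WT) (hSmeas : Measurable S) (hMmeas : Measurable M)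
    (hW : Measure.map WT μ = gaussianReal 0 (Real.toNNReal T))
    (hindep : IndepFun WT (fun ω => (S ω, M ω)) μ)
    (hL2 : ∀ a : ℝ, MemLp (fun ω => Real.exp (γ * T + σ * WT ω + a * S ω + M ω)) 2 μ)
    (hSL2 : MemLp S 2 μ)
    (Φ : ℝ → ℝ) (hΦ : ContDiff ℝ 1 Φ) (hΦ' : ∃ C, ∀ y, |deriv Φ y| ≤ C) :
    deriv (fun a => ∫ ω, Φ (x * Real.exp (γ * T + σ * WT ω + a * S ω + M ω)) ∂μ) α
      = 1 / (σ * T) *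
          ∫ ω, Φ (x * Real.exp (γ * T + σ * WT ω + α * S ω + M ω)) * WT ω * S ω ∂μ := by
  obtain ⟨C₀, hC₀⟩ := hΦ'
  set C := max C₀ 0 with hCdef
  have hC : 0 ≤ C := le_max_right _ _
  have hΦbd : ∀ y, |deriv Φ y| ≤ C := fun y => (hC₀ y).trans (le_max_left _ _)
  have hΦc : Continuous Φ := hΦ.continuous
  have hΦ'c : Continuous (deriv Φ) := hΦ.continuous_deriv le_rfl
  have hΦdiff : ∀ y : ℝ, HasDerivAt Φ (deriv Φ y) y := fun y =>
    (hΦ.differentiable one_ne_zero y).hasDerivAt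
  have hΦlin : ∀ y, |Φ y| ≤ |Φ 0| + C * |y| := by
    intro y
    have h1 := Convex.norm_image_sub_le_of_norm_deriv_le (s := (Set.univ : Set ℝ))
      (fun z _ => hΦ.differentiable one_ne_zero z) (fun z _ => by simpa using hΦbd z)
      convex_univ (Set.mem_univ 0) (Set.mem_univ y)
    rw [Real.norm_eq_abs, Real.norm_eq_abs, sub_zero] at h1
    have h2 := (abs_sub_abs_le_abs_sub (Φ y) (Φ 0)).trans h1
    linarith
  have hσT : σ * T ≠ 0 := mul_ne_zero hσ hT.ne'
  have habs : ∀ w : ℝ, |w| ≤ Real.exp |w| := fun w =>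
    le_trans (by linarith [abs_nonneg w]) (Real.add_one_le_exp |w|)
  have hEmeas : ∀ a : ℝ, Measurable fun ω => Real.exp (γ * T + σ * WT ω + a * S ω + M ω) :=
    fun a => (((measurable_const.add (hWmeas.const_mul σ)).add
      (hSmeas.const_mul a)).add hMmeas).exp
  -- Step 1 : differentiation under the integral sign
  have hb0 : Integrable (fun ω => (Real.exp (γ * T + σ * WT ω + (α - 1) * S ω + M ω)
      + Real.exp (γ * T + σ * WT ω + (α + 1) * S ω + M ω)) * S ω) μ := by
    have := integrable_L2_mul' ((hL2 (α - 1)).add (hL2 (α + 1))) hSL2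
    simpa [Pi.add_apply] using this
  have hbound_int : Integrable (fun ω => C * x *
      ((Real.exp (γ * T + σ * WT ω + (α - 1) * S ω + M ω)
        + Real.exp (γ * T + σ * WT ω + (α + 1) * S ω + M ω)) * |S ω|)) μ := by
    refine (hb0.abs.const_mul (C * x)).congr (ae_of_all _ fun ω => ?_)
    dsimp only
    rw [abs_mul, abs_of_pos (by positivity)]
  have hXint : Integrable (fun ω => Real.exp (γ * T + σ * WT ω + α * S ω + M ω)) μ :=
    (hL2 α).integrable one_le_two
  have hder : HasDerivAt
      (fun a => ∫ ω, Φ (x * Real.exp (γ * T + σ * WT ω + a * S ω + M ω)) ∂μ)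
      (∫ ω, deriv Φ (x * Real.exp (γ * T + σ * WT ω + α * S ω + M ω)) *
        (x * Real.exp (γ * T + σ * WT ω + α * S ω + M ω) * S ω) ∂μ) α := by
    refine (hasDerivAt_integral_of_dominated_loc_of_deriv_le (x₀ := α)
      (F := fun a ω => Φ (x * Real.exp (γ * T + σ * WT ω + a * S ω + M ω)))
      (F' := fun a ω => deriv Φ (x * Real.exp (γ * T + σ * WT ω + a * S ω + M ω)) *
        (x * Real.exp (γ * T + σ * WT ω + a * S ω + M ω) * S ω))
      (bound := fun ω => C * x *
        ((Real.exp (γ * T + σ * WT ω + (α - 1) * S ω + M ω)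
          + Real.exp (γ * T + σ * WT ω + (α + 1) * S ω + M ω)) * |S ω|))
      (Metric.ball_mem_nhds α one_pos) ?_ ?_ ?_ ?_ hbound_int ?_).2
    · exact Filter.Eventually.of_forall fun a =>
        (hΦc.measurable.comp ((hEmeas a).const_mul x)).aestronglyMeasurable
    · refine (((integrable_const (|Φ 0|)).add (hXint.const_mul (C * x))).mono'
        (hΦc.measurable.comp ((hEmeas α).const_mul x)).aestronglyMeasurable
        (ae_of_all _ fun ω => ?_))
      rw [Real.norm_eq_abs, Pi.add_apply]
      have h1 := hΦlin (x * Real.exp (γ * T + σ * WT ω + α * S ω + M ω))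
      rw [abs_of_pos (show (0:ℝ) < x * Real.exp (γ * T + σ * WT ω + α * S ω + M ω)
        by positivity)] at h1
      rw [← mul_assoc] at h1
      exact h1
    · exact ((hΦ'c.measurable.comp ((hEmeas α).const_mul x)).mul
        (((hEmeas α).const_mul x).mul hSmeas)).aestronglyMeasurable
    · refine ae_of_all _ fun ω a ha => ?_
      rw [Metric.mem_ball, Real.dist_eq] at ha
      obtain ⟨ha1, ha2⟩ := abs_lt.mp ha
      have hcomp : Real.exp (γ * T + σ * WT ω + a * S ω + M ω)
          ≤ Real.exp (γ * T + σ * WT ω + (α - 1) * S ω + M ω)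
            + Real.exp (γ * T + σ * WT ω + (α + 1) * S ω + M ω) := by
        rcases le_or_gt 0 (S ω) with hs | hs
        · have h3 : a * S ω ≤ (α + 1) * S ω := mul_le_mul_of_nonneg_right (by linarith) hs
          have h4 := Real.exp_le_exp.mpr
            (by linarith : γ * T + σ * WT ω + a * S ω + M ω
              ≤ γ * T + σ * WT ω + (α + 1) * S ω + M ω)
          linarith [Real.exp_pos (γ * T + σ * WT ω + (α - 1) * S ω + M ω)]
        · have h3 : a * S ω ≤ (α - 1) * S ω := by nlinarith
          have h4 := Real.exp_le_exp.mpr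
            (by linarith : γ * T + σ * WT ω + a * S ω + M ω
              ≤ γ * T + σ * WT ω + (α - 1) * S ω + M ω)
          linarith [Real.exp_pos (γ * T + σ * WT ω + (α + 1) * S ω + M ω)]
      rw [Real.norm_eq_abs, abs_mul]
      have h5 : |x * Real.exp (γ * T + σ * WT ω + a * S ω + M ω) * S ω|
          = x * Real.exp (γ * T + σ * WT ω + a * S ω + M ω) * |S ω| := by
        rw [abs_mul, abs_of_pos (by positivity)]
      rw [h5]
      calc |deriv Φ (x * Real.exp (γ * T + σ * WT ω + a * S ω + M ω))| *
            (x * Real.exp (γ * T + σ * WT ω + a * S ω + M ω) * |S ω|)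
          ≤ C * (x * Real.exp (γ * T + σ * WT ω + a * S ω + M ω) * |S ω|) :=
            mul_le_mul_of_nonneg_right (hΦbd _) (by positivity)
        _ ≤ C * (x * (Real.exp (γ * T + σ * WT ω + (α - 1) * S ω + M ω)
            + Real.exp (γ * T + σ * WT ω + (α + 1) * S ω + M ω)) * |S ω|) := by
            apply mul_le_mul_of_nonneg_left _ hC
            apply mul_le_mul_of_nonneg_right _ (abs_nonneg _)
            exact mul_le_mul_of_nonneg_left hcomp hx.le
        _ = C * x * ((Real.exp (γ * T + σ * WT ω + (α - 1) * S ω + M ω)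
            + Real.exp (γ * T + σ * WT ω + (α + 1) * S ω + M ω)) * |S ω|) := by ring
    · refine ae_of_all _ fun ω a _ => ?_
      have hlin : HasDerivAt (fun a : ℝ => γ * T + σ * WT ω + a * S ω + M ω) (S ω) a := by
        simpa using (((hasDerivAt_id a).mul_const (S ω)).const_add
          (γ * T + σ * WT ω)).add_const (M ω)
      have hX := hlin.exp.const_mul x
      have := (hΦdiff (x * Real.exp (γ * T + σ * WT ω + a * S ω + M ω))).comp a hX
      refine this.congr_deriv ?_
      ring
  rw [hder.deriv]
  -- Step 2 : independence + Fubini + Gaussian integration by parts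
  set P : Ω → ℝ × ℝ := fun ω => (S ω, M ω) with hPdef
  have hPmeas : Measurable P := hSmeas.prodMk hMmeas
  have hρprob : IsProbabilityMeasure (μ.map P) := Measure.isProbabilityMeasure_map hPmeas.aemeasurable
  have hmap : μ.map (fun ω => (WT ω, P ω))
      = (gaussianReal 0 (Real.toNNReal T)).prod (μ.map P) := by
    rw [← hW]
    exact (indepFun_iff_map_prod_eq_prod_map_map hWmeas.aemeasurable
      hPmeas.aemeasurable).mp hindep
  set G : ℝ × (ℝ × ℝ) → ℝ := fun p =>
    Φ (x * Real.exp (γ * T + σ * p.1 + α * p.2.1 + p.2.2)) * p.1 * p.2.1 with hGdef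
  set H : ℝ × (ℝ × ℝ) → ℝ := fun p =>
    deriv Φ (x * Real.exp (γ * T + σ * p.1 + α * p.2.1 + p.2.2)) *
      (x * Real.exp (γ * T + σ * p.1 + α * p.2.1 + p.2.2) * p.2.1) with hHdef
  have hΞc : Continuous fun p : ℝ × (ℝ × ℝ) =>
      x * Real.exp (γ * T + σ * p.1 + α * p.2.1 + p.2.2) := by
    apply continuous_const.mul
    apply Real.continuous_exp.comp
    exact ((continuous_const.add (continuous_const.mul continuous_fst)).add
      (continuous_const.mul (continuous_fst.comp continuous_snd))).add
      (continuous_snd.comp continuous_snd)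
  have hGc : Continuous G := ((hΦc.comp hΞc).mul continuous_fst).mul
    (continuous_fst.comp continuous_snd)
  have hHc : Continuous H := (hΦ'c.comp hΞc).mul
    (hΞc.mul (continuous_fst.comp continuous_snd))
  have hGpull : ∫ p, G p ∂((gaussianReal 0 (Real.toNNReal T)).prod (μ.map P))
      = ∫ ω, G (WT ω, P ω) ∂μ := by
    rw [← hmap]
    exact integral_map (hWmeas.prodMk hPmeas).aemeasurable hGc.aestronglyMeasurable
  have hHpull : ∫ p, H p ∂((gaussianReal 0 (Real.toNNReal T)).prod (μ.map P))
      = ∫ ω, H (WT ω, P ω) ∂μ := by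
    rw [← hmap]
    exact integral_map (hWmeas.prodMk hPmeas).aemeasurable hHc.aestronglyMeasurable
  -- integrability of the components
  have hθabs : Integrable (fun w : ℝ => |w|) (gaussianReal 0 (Real.toNNReal T)) := by
    refine integrable_gaussian_of_bound hT continuous_abs 1 1 (fun w => ?_)
    rw [abs_abs, one_mul, one_mul]
    exact habs w
  have hθ2 : Integrable (fun w : ℝ => Real.exp (σ * w) * |w|)
      (gaussianReal 0 (Real.toNNReal T)) := by
    refine integrable_gaussian_of_bound hT ((Real.continuous_exp.comp
      (continuous_const.mul continuous_id)).mul continuous_abs) 1 (|σ| + 1) (fun w => ?_)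
    rw [one_mul, abs_mul, abs_of_pos (Real.exp_pos _), abs_abs, add_mul, Real.exp_add, one_mul]
    exact mul_le_mul (Real.exp_le_exp.mpr ((le_abs_self _).trans (abs_mul σ w).le))
      (habs w) (abs_nonneg w) (Real.exp_pos _).le
  have hθ3 : Integrable (fun w : ℝ => Real.exp (σ * w))
      (gaussianReal 0 (Real.toNNReal T)) := by
    refine integrable_gaussian_of_bound hT (Real.continuous_exp.comp
      (continuous_const.mul continuous_id)) 1 |σ| (fun w => ?_)
    rw [one_mul, abs_of_pos (Real.exp_pos _)]
    exact Real.exp_le_exp.mpr ((le_abs_self _).trans (abs_mul σ w).le)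
  have hSabs : Integrable (fun ω => |S ω|) μ := (hSL2.integrable one_le_two).abs
  have hρ1 : Integrable (fun y : ℝ × ℝ => |y.1|) (μ.map P) := by
    refine (integrable_map_measure ?_ hPmeas.aemeasurable).mpr ?_
    · exact (continuous_abs.comp continuous_fst).aestronglyMeasurable
    · simpa [Function.comp_def, hPdef] using hSabs
  -- the compound Poisson part is in L2
  have hDmeas : Measurable fun ω => Real.exp (α * S ω + M ω) :=
    ((hSmeas.const_mul α).add hMmeas).exp
  have hDL2 : MemLp (fun ω => Real.exp (α * S ω + M ω)) 2 μ := by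
    have hU : Measurable fun ω => Real.exp (2 * σ * WT ω) := (hWmeas.const_mul (2 * σ)).exp
    have hVmeas : Measurable fun ω => Real.exp (2 * γ * T + 2 * α * S ω + 2 * M ω) :=
      ((measurable_const.add (hSmeas.const_mul (2 * α))).add (hMmeas.const_mul 2)).exp
    have hsq : Integrable (fun ω => (Real.exp (γ * T + σ * WT ω + α * S ω + M ω)) ^ 2) μ :=
      (memLp_two_iff_integrable_sq (hEmeas α).aestronglyMeasurable).mp (hL2 α)
    have hindep2 : IndepFun (fun ω => Real.exp (2 * σ * WT ω))
        (fun ω => Real.exp (2 * γ * T + 2 * α * S ω + 2 * M ω)) μ := by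
      exact hindep.comp (φ := fun w : ℝ => Real.exp (2 * σ * w))
        (ψ := fun y : ℝ × ℝ => Real.exp (2 * γ * T + 2 * α * y.1 + 2 * y.2))
        ((measurable_id.const_mul (2 * σ)).exp)
        (((measurable_const.add (measurable_fst.const_mul (2 * α))).add
          (measurable_snd.const_mul 2)).exp)
    have hne : ¬ (fun ω => Real.exp (2 * σ * WT ω)) =ᵐ[μ] 0 := by
      intro h
      haveI : (MeasureTheory.ae μ).NeBot := ae_neBot.mpr (IsProbabilityMeasure.ne_zero (μ := μ))
      obtain ⟨ω, hω⟩ := h.exists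
      exact Real.exp_ne_zero _ hω
    have hVint : Integrable (fun ω => Real.exp (2 * γ * T + 2 * α * S ω + 2 * M ω)) μ := by
      refine hindep2.integrable_right_of_integrable_mul (· * ·) 1 one_ne_zero
          (fun a b => by simp [enorm_mul]) ?_ hU.aestronglyMeasurable
        hVmeas.aestronglyMeasurable hne
      refine hsq.congr (ae_of_all _ fun ω => ?_)
      show (Real.exp (γ * T + σ * WT ω + α * S ω + M ω)) ^ 2
        = Real.exp (2 * σ * WT ω) * Real.exp (2 * γ * T + 2 * α * S ω + 2 * M ω)
      rw [sq, ← Real.exp_add, ← Real.exp_add]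
      ring_nf
    rw [memLp_two_iff_integrable_sq hDmeas.aestronglyMeasurable]
    have heq : (fun ω => (Real.exp (α * S ω + M ω)) ^ 2)
        = fun ω => Real.exp (-(2 * γ * T)) * Real.exp (2 * γ * T + 2 * α * S ω + 2 * M ω) := by
      funext ω
      rw [sq, ← Real.exp_add, ← Real.exp_add]
      ring_nf
    rw [heq]
    exact hVint.const_mul _
  have hDS : Integrable (fun ω => Real.exp (α * S ω + M ω) * |S ω|) μ := by
    simpa using integrable_L2_mul' hDL2 hSL2.abs
  have hρ2 : Integrable (fun y : ℝ × ℝ => Real.exp (α * y.1 + y.2) * |y.1|) (μ.map P) := by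
    refine (integrable_map_measure ?_ hPmeas.aemeasurable).mpr ?_
    · exact Continuous.aestronglyMeasurable
        ((Real.continuous_exp.comp ((continuous_const.mul continuous_fst).add
          continuous_snd)).mul (continuous_abs.comp continuous_fst))
    · simpa [Function.comp_def, hPdef] using hDS
  have hprod1 : Integrable (fun p : ℝ × (ℝ × ℝ) => |p.1| * |p.2.1|)
      ((gaussianReal 0 (Real.toNNReal T)).prod (μ.map P)) := by
    simpa using hθabs.mul_prod hρ1
  have hprod2 : Integrable (fun p : ℝ × (ℝ × ℝ) =>
      (Real.exp (σ * p.1) * |p.1|) * (Real.exp (α * p.2.1 + p.2.2) * |p.2.1|))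
      ((gaussianReal 0 (Real.toNNReal T)).prod (μ.map P)) := by
    simpa using hθ2.mul_prod hρ2
  have hprod3 : Integrable (fun p : ℝ × (ℝ × ℝ) =>
      Real.exp (σ * p.1) * (Real.exp (α * p.2.1 + p.2.2) * |p.2.1|))
      ((gaussianReal 0 (Real.toNNReal T)).prod (μ.map P)) := by
    simpa using hθ3.mul_prod hρ2
  have hdexp : ∀ w s m : ℝ, Real.exp (γ * T + σ * w + α * s + m)
      = Real.exp (γ * T) * Real.exp (σ * w) * Real.exp (α * s + m) := by
    intro w s m
    rw [← Real.exp_add, ← Real.exp_add]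
    ring_nf
  have hGint : Integrable G ((gaussianReal 0 (Real.toNNReal T)).prod (μ.map P)) := by
    refine ((hprod1.const_mul (|Φ 0|)).add
      (hprod2.const_mul (C * x * Real.exp (γ * T)))).mono'
      hGc.aestronglyMeasurable (ae_of_all _ fun p => ?_)
    obtain ⟨w, s, m⟩ := p
    simp only [hGdef, Pi.add_apply, Real.norm_eq_abs]
    have h1 := hΦlin (x * Real.exp (γ * T + σ * w + α * s + m))
    rw [abs_of_pos (show (0:ℝ) < x * Real.exp (γ * T + σ * w + α * s + m) by positivity)] at h1
    calc |Φ (x * Real.exp (γ * T + σ * w + α * s + m)) * w * s|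
        = |Φ (x * Real.exp (γ * T + σ * w + α * s + m))| * |w| * |s| := by
          rw [abs_mul, abs_mul]
      _ ≤ (|Φ 0| + C * (x * Real.exp (γ * T + σ * w + α * s + m))) * |w| * |s| := by
          apply mul_le_mul_of_nonneg_right _ (abs_nonneg s)
          exact mul_le_mul_of_nonneg_right h1 (abs_nonneg w)
      _ = |Φ 0| * (|w| * |s|) + C * x * Real.exp (γ * T) *
          ((Real.exp (σ * w) * |w|) * (Real.exp (α * s + m) * |s|)) := by
          rw [hdexp w s m]; ring
  have hHint : Integrable H ((gaussianReal 0 (Real.toNNReal T)).prod (μ.map P)) := by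
    refine (hprod3.const_mul (C * x * Real.exp (γ * T))).mono'
      hHc.aestronglyMeasurable (ae_of_all _ fun p => ?_)
    obtain ⟨w, s, m⟩ := p
    simp only [hHdef, Real.norm_eq_abs]
    have h5 : |x * Real.exp (γ * T + σ * w + α * s + m) * s|
        = x * Real.exp (γ * T + σ * w + α * s + m) * |s| := by
      rw [abs_mul, abs_of_pos (by positivity)]
    calc |deriv Φ (x * Real.exp (γ * T + σ * w + α * s + m)) *
          (x * Real.exp (γ * T + σ * w + α * s + m) * s)|
        = |deriv Φ (x * Real.exp (γ * T + σ * w + α * s + m))| *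
          (x * Real.exp (γ * T + σ * w + α * s + m) * |s|) := by
          rw [abs_mul, h5]
      _ ≤ C * (x * Real.exp (γ * T + σ * w + α * s + m) * |s|) :=
          mul_le_mul_of_nonneg_right (hΦbd _) (by positivity)
      _ = C * x * Real.exp (γ * T) *
          (Real.exp (σ * w) * (Real.exp (α * s + m) * |s|)) := by
          rw [hdexp w s m]; ring
  -- fiberwise Gaussian integration by parts
  have hinner : ∀ s m : ℝ, ∫ w, G (w, (s, m)) ∂(gaussianReal 0 (Real.toNNReal T))
      = (σ * T) * ∫ w, H (w, (s, m)) ∂(gaussianReal 0 (Real.toNNReal T)) := by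
    intro s m
    have hXw : ∀ w : ℝ, HasDerivAt (fun w => x * Real.exp (γ * T + σ * w + α * s + m))
        (x * (Real.exp (γ * T + σ * w + α * s + m) * σ)) w := by
      intro w
      have hl : HasDerivAt (fun w : ℝ => γ * T + σ * w + α * s + m) σ w := by
        simpa using ((((hasDerivAt_id w).const_mul σ).const_add (γ * T)).add_const
          (α * s)).add_const m
      exact hl.exp.const_mul x
    have hfder : ∀ w : ℝ, HasDerivAt
        (fun w => Φ (x * Real.exp (γ * T + σ * w + α * s + m)) * s)
        ((deriv Φ (x * Real.exp (γ * T + σ * w + α * s + m)) *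
          (x * (Real.exp (γ * T + σ * w + α * s + m) * σ))) * s) w := fun w =>
      ((hΦdiff (x * Real.exp (γ * T + σ * w + α * s + m))).comp w (hXw w)).mul_const s
    have hf'c : Continuous fun w : ℝ =>
        (deriv Φ (x * Real.exp (γ * T + σ * w + α * s + m)) *
          (x * (Real.exp (γ * T + σ * w + α * s + m) * σ))) * s := by
      apply Continuous.mul _ continuous_const
      apply Continuous.mul
      · apply hΦ'c.comp
        apply continuous_const.mul
        apply Real.continuous_exp.comp
        exact ((continuous_const.add (continuous_const.mul continuous_id)).add
          continuous_const).add continuous_const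
      · apply continuous_const.mul
        apply Continuous.mul _ continuous_const
        apply Real.continuous_exp.comp
        exact ((continuous_const.add (continuous_const.mul continuous_id)).add
          continuous_const).add continuous_const
    set A : ℝ := (|Φ 0| + C * x * Real.exp (γ * T + α * s + m) * (1 + |σ|)) * (|s| + 1) with hA
    have hbds : ∀ w : ℝ, (|Φ (x * Real.exp (γ * T + σ * w + α * s + m)) * s|
          ≤ A * Real.exp (|σ| * |w|))
        ∧ (|(deriv Φ (x * Real.exp (γ * T + σ * w + α * s + m)) *
            (x * (Real.exp (γ * T + σ * w + α * s + m) * σ))) * s|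
          ≤ A * Real.exp (|σ| * |w|)) := by
      intro w
      have hd0 : (0:ℝ) < Real.exp (γ * T + α * s + m) := Real.exp_pos _
      have hr0 : (0:ℝ) < Real.exp (σ * w) := Real.exp_pos _
      have hu1 : (1:ℝ) ≤ Real.exp (|σ| * |w|) :=
        Real.one_le_exp (by positivity)
      have hru : Real.exp (σ * w) ≤ Real.exp (|σ| * |w|) :=
        Real.exp_le_exp.mpr ((le_abs_self _).trans (abs_mul σ w).le)
      have hsplit : Real.exp (γ * T + σ * w + α * s + m)
          = Real.exp (γ * T + α * s + m) * Real.exp (σ * w) := by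
        rw [← Real.exp_add]; ring_nf
      have hΦ0 : (0:ℝ) ≤ |Φ 0| := abs_nonneg _
      constructor
      · have h1 := hΦlin (x * Real.exp (γ * T + σ * w + α * s + m))
        rw [abs_of_pos (show (0:ℝ) < x * Real.exp (γ * T + σ * w + α * s + m)
          by positivity)] at h1
        rw [abs_mul]
        calc |Φ (x * Real.exp (γ * T + σ * w + α * s + m))| * |s|
            ≤ (|Φ 0| + C * (x * Real.exp (γ * T + σ * w + α * s + m))) * |s| :=
              mul_le_mul_of_nonneg_right h1 (abs_nonneg s)
          _ ≤ A * Real.exp (|σ| * |w|) := by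
              rw [hA, hsplit]
              have hk : (0:ℝ) ≤ C * x * Real.exp (γ * T + α * s + m) := by positivity
              have e3 : (0:ℝ) ≤ Real.exp (|σ| * |w|) := (Real.exp_pos _).le
              have e1 : C * (x * (Real.exp (γ * T + α * s + m) * Real.exp (σ * w)))
                  ≤ C * x * Real.exp (γ * T + α * s + m) * Real.exp (|σ| * |w|) := by
                calc C * (x * (Real.exp (γ * T + α * s + m) * Real.exp (σ * w)))
                    = C * x * Real.exp (γ * T + α * s + m) * Real.exp (σ * w) := by ring
                  _ ≤ _ := mul_le_mul_of_nonneg_left hru hk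
              have e2 : |Φ 0| ≤ |Φ 0| * Real.exp (|σ| * |w|) := by nlinarith
              nlinarith [mul_nonneg hk e3, mul_nonneg (mul_nonneg hk e3) (abs_nonneg σ),
                mul_nonneg hΦ0 e3, abs_nonneg s,
                mul_le_mul_of_nonneg_right e1 (abs_nonneg s),
                mul_le_mul_of_nonneg_right e2 (abs_nonneg s)]
      · rw [abs_mul, abs_mul]
        have h6 : |x * (Real.exp (γ * T + σ * w + α * s + m) * σ)|
            = x * Real.exp (γ * T + σ * w + α * s + m) * |σ| := by
          rw [abs_mul, abs_mul, abs_of_pos hx, abs_of_pos (Real.exp_pos _)]; ring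
        rw [h6]
        calc |deriv Φ (x * Real.exp (γ * T + σ * w + α * s + m))| *
              (x * Real.exp (γ * T + σ * w + α * s + m) * |σ|) * |s|
            ≤ C * (x * Real.exp (γ * T + σ * w + α * s + m) * |σ|) * |s| := by
              apply mul_le_mul_of_nonneg_right _ (abs_nonneg s)
              exact mul_le_mul_of_nonneg_right (hΦbd _) (by positivity)
          _ ≤ A * Real.exp (|σ| * |w|) := by
              rw [hA, hsplit]
              have hk : (0:ℝ) ≤ C * x * Real.exp (γ * T + α * s + m) := by positivity
              have e3 : (0:ℝ) ≤ Real.exp (|σ| * |w|) := (Real.exp_pos _).le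
              have e1 : C * (x * (Real.exp (γ * T + α * s + m) * Real.exp (σ * w)) * |σ|)
                  ≤ C * x * Real.exp (γ * T + α * s + m) * Real.exp (|σ| * |w|) * |σ| := by
                calc C * (x * (Real.exp (γ * T + α * s + m) * Real.exp (σ * w)) * |σ|)
                    = C * x * Real.exp (γ * T + α * s + m) * Real.exp (σ * w) * |σ| := by ring
                  _ ≤ _ := mul_le_mul_of_nonneg_right
                      (mul_le_mul_of_nonneg_left hru hk) (abs_nonneg σ)
              nlinarith [mul_nonneg hk e3, mul_nonneg (mul_nonneg hk e3) (abs_nonneg σ),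
                mul_nonneg hΦ0 e3, abs_nonneg s,
                mul_le_mul_of_nonneg_right e1 (abs_nonneg s)]
    have hib := gaussian_ibp hT hfder hf'c (fun w => (hbds w).1) (fun w => (hbds w).2)
    calc ∫ w, G (w, (s, m)) ∂(gaussianReal 0 (Real.toNNReal T))
        = ∫ w, (Φ (x * Real.exp (γ * T + σ * w + α * s + m)) * s) * w
            ∂(gaussianReal 0 (Real.toNNReal T)) := by
          refine integral_congr_ae (ae_of_all _ fun w => ?_)
          simp only [hGdef]
          ring
      _ = T * ∫ w, (deriv Φ (x * Real.exp (γ * T + σ * w + α * s + m)) *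
            (x * (Real.exp (γ * T + σ * w + α * s + m) * σ))) * s
            ∂(gaussianReal 0 (Real.toNNReal T)) := hib
      _ = T * ∫ w, σ * H (w, (s, m)) ∂(gaussianReal 0 (Real.toNNReal T)) := by
          congr 1
          refine integral_congr_ae (ae_of_all _ fun w => ?_)
          simp only [hHdef]
          ring
      _ = (σ * T) * ∫ w, H (w, (s, m)) ∂(gaussianReal 0 (Real.toNNReal T)) := by
          rw [integral_const_mul]; ring
  have hfub : ∫ p, G p ∂((gaussianReal 0 (Real.toNNReal T)).prod (μ.map P))
      = (σ * T) * ∫ p, H p ∂((gaussianReal 0 (Real.toNNReal T)).prod (μ.map P)) := by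
    rw [integral_prod_symm _ hGint, integral_prod_symm _ hHint, ← integral_const_mul]
    refine integral_congr_ae (ae_of_all _ fun y => ?_)
    obtain ⟨s, m⟩ := y
    simpa using hinner s m
  -- assemble everything
  have hGcomp : ∀ ω, G (WT ω, P ω)
      = Φ (x * Real.exp (γ * T + σ * WT ω + α * S ω + M ω)) * WT ω * S ω := fun ω => by
    simp only [hGdef, hPdef]
  have hHcomp : ∀ ω, H (WT ω, P ω)
      = deriv Φ (x * Real.exp (γ * T + σ * WT ω + α * S ω + M ω)) *
        (x * Real.exp (γ * T + σ * WT ω + α * S ω + M ω) * S ω) := fun ω => by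
    simp only [hHdef, hPdef]
  have hchain : ∫ ω, Φ (x * Real.exp (γ * T + σ * WT ω + α * S ω + M ω)) * WT ω * S ω ∂μ
      = (σ * T) * ∫ ω, deriv Φ (x * Real.exp (γ * T + σ * WT ω + α * S ω + M ω)) *
        (x * Real.exp (γ * T + σ * WT ω + α * S ω + M ω) * S ω) ∂μ := by
    rw [← integral_congr_ae (ae_of_all _ hGcomp), ← hGpull, hfub, hHpull]
  rw [hchain]
  field_simp
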